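/- Let m ≥ 4 and q > m, and let Inj(m,q) ⊆ Q^m be the set of m-tuples with pairwise distinct entries. Then the vertices μ = (1,1,1,4,5,...,m) and ν = (1,1,3,3,5,6,...,m) both satisfy d(μ, Inj(m,q)) = 2 = d(ν, Inj(m,q)), but Num(μ) ≠ Num(ν); consequently no subgroup of Diag_m(S_q) ⋊ S_m can map μ to ν. -/

import Mathlib

/-- `numCount α p` is the number of symbols appearing exactly `p` times in `α`,
encoding `Num(α)`. -/
def numCount {m q : ℕ} (α : Fin m → Fin q) (p : ℕ) : ℕ :=
  (Finset.univ.filter (fun a : Fin q =>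
    (Finset.univ.filter (fun i : Fin m => α i = a)).card = p)).card

/-- Distance from a vertex to a code. -/
noncomputable def distToCode {m q : ℕ} (C : Set (Fin m → Fin q)) (ν : Fin m → Fin q) : ℕ :=
  sInf {n | ∃ c ∈ C, hammingDist ν c = n}

theorem stmt_7 (m q : ℕ) (hm : 4 ≤ m) (hq : m < q)
    (Inj : Set (Fin m → Fin q)) (hInj : Inj = {α | Function.Injective α})
    (μ ν : Fin m → Fin q)
    -- μ = (1,1,1,4,5,…,m), written with 0-based symbols
    (hμ : ∀ i : Fin m, μ i = if i.val < 3 then ⟨0, by omega⟩ else ⟨i.val, by omega⟩)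
    -- ν = (1,1,3,3,5,6,…,m), written with 0-based symbols
    (hν : ∀ i : Fin m, ν i = if i.val < 2 then ⟨0, by omega⟩
      else if i.val < 4 then ⟨2, by omega⟩ else ⟨i.val, by omega⟩) :
    distToCode Inj μ = 2 ∧ distToCode Inj ν = 2 ∧ numCount μ ≠ numCount ν ∧
    ∀ (h : Equiv.Perm (Fin q)) (σ : Equiv.Perm (Fin m)),
      (fun i => h (μ (σ⁻¹ i))) ≠ ν := by
  have h0m : 0 < m := by omega
  have h1m : 1 < m := by omega
  have h2m : 2 < m := by omega
  have h3m : 3 < m := by omega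
  have h0q : 0 < q := by omega
  have h2q : 2 < q := by omega
  -- value-level descriptions
  have hμval : ∀ i : Fin m, (μ i).val = if i.val < 3 then 0 else i.val := by
    intro i; rw [hμ i]
    by_cases h3 : i.val < 3 <;> simp [h3]
  have hνval : ∀ i : Fin m, (ν i).val = if i.val < 2 then 0
      else if i.val < 4 then 2 else i.val := by
    intro i; rw [hν i]
    by_cases h2 : i.val < 2
    · simp [h2]
    · by_cases h4 : i.val < 4 <;> simp [h2, h4]
  have hμ0 : ∀ i : Fin m, i.val < 3 → μ i = ⟨0, h0q⟩ := by
    intro i hi; rw [hμ i, if_pos hi]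
  have hν0 : ∀ i : Fin m, i.val < 2 → ν i = ⟨0, h0q⟩ := by
    intro i hi; rw [hν i, if_pos hi]
  have hνtwo : ∀ i : Fin m, 2 ≤ i.val → i.val < 4 → ν i = ⟨2, h2q⟩ := by
    intro i hi hi4; rw [hν i, if_neg (by omega), if_pos hi4]
  -- the identity-like codeword
  have hcinj : Function.Injective (fun i : Fin m => Fin.castLE (le_of_lt hq) i) :=
    Fin.castLE_injective _
  have hcmem : (fun i : Fin m => Fin.castLE (le_of_lt hq) i) ∈ Inj := by
    rw [hInj]; exact hcinj
  have hamm : ∀ (x y : Fin m → Fin q),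
      hammingDist x y = (Finset.univ.filter fun i => x i ≠ y i).card := fun x y => rfl
  -- distance from μ to the codeword is 2
  have hdμ : hammingDist μ (fun i => Fin.castLE (le_of_lt hq) i) = 2 := by
    rw [hamm]
    have hfe : (Finset.univ.filter fun i => μ i ≠ Fin.castLE (le_of_lt hq) i)
        = {(⟨1, h1m⟩ : Fin m), ⟨2, h2m⟩} := by
      ext i
      simp only [Finset.mem_filter, Finset.mem_univ, true_and, ne_eq, Fin.ext_iff,
        Fin.coe_castLE, Finset.mem_insert, Finset.mem_singleton, Fin.val_mk, hμval i]
      by_cases h3 : i.val < 3 <;> simp [h3] <;> omega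
    rw [hfe, Finset.card_pair (by simp [Fin.ext_iff])]
  -- distance from ν to the codeword is 2
  have hdν : hammingDist ν (fun i => Fin.castLE (le_of_lt hq) i) = 2 := by
    rw [hamm]
    have hfe : (Finset.univ.filter fun i => ν i ≠ Fin.castLE (le_of_lt hq) i)
        = {(⟨1, h1m⟩ : Fin m), ⟨3, h3m⟩} := by
      ext i
      simp only [Finset.mem_filter, Finset.mem_univ, true_and, ne_eq, Fin.ext_iff,
        Fin.coe_castLE, Finset.mem_insert, Finset.mem_singleton, Fin.val_mk, hνval i]
      by_cases h2 : i.val < 2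
      · simp [h2]; omega
      · by_cases h4 : i.val < 4 <;> simp [h2, h4] <;> omega
    rw [hfe, Finset.card_pair (by simp [Fin.ext_iff])]
  -- lower bound for μ
  have keyμ : ∀ x : Fin m → Fin q, Function.Injective x → 2 ≤ hammingDist μ x := by
    intro x hx
    by_contra hlt
    push_neg at hlt
    rw [hamm] at hlt
    have hcard1 : (Finset.univ.filter fun i => μ i ≠ x i).card ≤ 1 := by omega
    have hone := Finset.card_le_one.mp hcard1
    have fix : ∀ i : Fin m, i.val < 3 → i ∉ (Finset.univ.filter fun j => μ j ≠ x j) →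
        x i = ⟨0, h0q⟩ := by
      intro i hi hmem
      simp only [Finset.mem_filter, Finset.mem_univ, true_and, not_not] at hmem
      rw [← hmem, hμ0 i hi]
    have hne01 : (⟨0, h0m⟩ : Fin m) ≠ ⟨1, h1m⟩ := by simp [Fin.ext_iff]
    have hne02 : (⟨0, h0m⟩ : Fin m) ≠ ⟨2, h2m⟩ := by simp [Fin.ext_iff]
    have hne12 : (⟨1, h1m⟩ : Fin m) ≠ ⟨2, h2m⟩ := by simp [Fin.ext_iff]
    have : ∃ i j : Fin m, i ≠ j ∧ x i = ⟨0, h0q⟩ ∧ x j = ⟨0, h0q⟩ := by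
      by_cases h0 : (⟨0, h0m⟩ : Fin m) ∈ (Finset.univ.filter fun k => μ k ≠ x k)
      · refine ⟨⟨1, h1m⟩, ⟨2, h2m⟩, hne12, ?_, ?_⟩
        · exact fix _ (show (1:ℕ) < 3 by omega) (fun h1 => hne01 (hone _ h0 _ h1))
        · exact fix _ (show (2:ℕ) < 3 by omega) (fun h1 => hne02 (hone _ h0 _ h1))
      · by_cases h1 : (⟨1, h1m⟩ : Fin m) ∈ (Finset.univ.filter fun k => μ k ≠ x k)
        · exact ⟨⟨0, h0m⟩, ⟨2, h2m⟩, hne02, fix _ (show (0:ℕ) < 3 by omega) h0,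
            fix _ (show (2:ℕ) < 3 by omega) (fun h2 => hne12 (hone _ h1 _ h2))⟩
        · exact ⟨⟨0, h0m⟩, ⟨1, h1m⟩, hne01, fix _ (show (0:ℕ) < 3 by omega) h0,
            fix _ (show (1:ℕ) < 3 by omega) h1⟩
    obtain ⟨i, j, hij, hxi, hxj⟩ := this
    exact hij (hx (hxi.trans hxj.symm))
  -- lower bound for ν
  have keyν : ∀ x : Fin m → Fin q, Function.Injective x → 2 ≤ hammingDist ν x := by
    intro x hx
    by_contra hlt
    push_neg at hlt
    rw [hamm] at hlt
    have hcard1 : (Finset.univ.filter fun i => ν i ≠ x i).card ≤ 1 := by omega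
    have hone := Finset.card_le_one.mp hcard1
    have fix : ∀ i : Fin m, i ∉ (Finset.univ.filter fun j => ν j ≠ x j) → x i = ν i := by
      intro i hmem
      simp only [Finset.mem_filter, Finset.mem_univ, true_and, not_not] at hmem
      exact hmem.symm
    have hne01 : (⟨0, h0m⟩ : Fin m) ≠ ⟨1, h1m⟩ := by simp [Fin.ext_iff]
    have hne02 : (⟨0, h0m⟩ : Fin m) ≠ ⟨2, h2m⟩ := by simp [Fin.ext_iff]
    have hne12 : (⟨1, h1m⟩ : Fin m) ≠ ⟨2, h2m⟩ := by simp [Fin.ext_iff]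
    have hne03 : (⟨0, h0m⟩ : Fin m) ≠ ⟨3, h3m⟩ := by simp [Fin.ext_iff]
    have hne13 : (⟨1, h1m⟩ : Fin m) ≠ ⟨3, h3m⟩ := by simp [Fin.ext_iff]
    have hne23 : (⟨2, h2m⟩ : Fin m) ≠ ⟨3, h3m⟩ := by simp [Fin.ext_iff]
    by_cases h2 : (⟨2, h2m⟩ : Fin m) ∈ (Finset.univ.filter fun k => ν k ≠ x k)
    · have f0 := fix ⟨0, h0m⟩ (fun h => hne02 (hone _ h _ h2))
      have f1 := fix ⟨1, h1m⟩ (fun h => hne12 (hone _ h _ h2))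
      have : x ⟨0, h0m⟩ = x ⟨1, h1m⟩ := by
        rw [f0, f1, hν0 _ (show (0:ℕ) < 2 by omega), hν0 _ (show (1:ℕ) < 2 by omega)]
      exact hne01 (hx this)
    · by_cases h3 : (⟨3, h3m⟩ : Fin m) ∈ (Finset.univ.filter fun k => ν k ≠ x k)
      · have f0 := fix ⟨0, h0m⟩ (fun h => hne03 (hone _ h _ h3))
        have f1 := fix ⟨1, h1m⟩ (fun h => hne13 (hone _ h _ h3))
        have : x ⟨0, h0m⟩ = x ⟨1, h1m⟩ := by
          rw [f0, f1, hν0 _ (show (0:ℕ) < 2 by omega), hν0 _ (show (1:ℕ) < 2 by omega)]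
        exact hne01 (hx this)
      · have : x ⟨2, h2m⟩ = x ⟨3, h3m⟩ := by
          rw [fix _ h2, fix _ h3, hνtwo _ (show 2 ≤ (2:ℕ) by omega) (show (2:ℕ) < 4 by omega),
            hνtwo _ (show 2 ≤ (3:ℕ) by omega) (show (3:ℕ) < 4 by omega)]
        exact hne23 (hx this)
  -- distToCode computations
  have distμ : distToCode Inj μ = 2 := by
    unfold distToCode
    apply le_antisymm
    · exact Nat.sInf_le ⟨_, hcmem, hdμ⟩
    · refine le_csInf ⟨2, _, hcmem, hdμ⟩ ?_
      rintro n ⟨x, hxmem, rfl⟩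
      rw [hInj] at hxmem
      exact keyμ x hxmem
  have distν : distToCode Inj ν = 2 := by
    unfold distToCode
    apply le_antisymm
    · exact Nat.sInf_le ⟨_, hcmem, hdν⟩
    · refine le_csInf ⟨2, _, hcmem, hdν⟩ ?_
      rintro n ⟨x, hxmem, rfl⟩
      rw [hInj] at hxmem
      exact keyν x hxmem
  -- ν has all fibers of size ≤ 2
  have hνfib : ∀ a : Fin q, (Finset.univ.filter fun i : Fin m => ν i = a).card ≤ 2 := by
    intro a
    have hval : ∀ i ∈ (Finset.univ.filter fun i : Fin m => ν i = a),
        (if i.val < 2 then 0 else if i.val < 4 then 2 else i.val) = a.val := by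
      intro i hi
      simp only [Finset.mem_filter, Finset.mem_univ, true_and] at hi
      rw [← hνval i, hi]
    by_cases ha0 : a.val = 0
    · have hsub : (Finset.univ.filter fun i : Fin m => ν i = a) ⊆ {⟨0, h0m⟩, ⟨1, h1m⟩} := by
        intro i hi
        have := hval i hi
        simp only [Finset.mem_insert, Finset.mem_singleton, Fin.ext_iff, Fin.val_mk]
        by_cases hl2 : i.val < 2
        · omega
        · by_cases hl4 : i.val < 4 <;> simp [hl2, hl4] at this <;> omega
      exact le_trans (Finset.card_le_card hsub)
        ((Finset.card_insert_le _ _).trans (by simp))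
    · by_cases ha2 : a.val = 2
      · have hsub : (Finset.univ.filter fun i : Fin m => ν i = a) ⊆ {⟨2, h2m⟩, ⟨3, h3m⟩} := by
          intro i hi
          have := hval i hi
          simp only [Finset.mem_insert, Finset.mem_singleton, Fin.ext_iff, Fin.val_mk]
          by_cases hl2 : i.val < 2
          · simp [hl2] at this; omega
          · by_cases hl4 : i.val < 4 <;> simp [hl2, hl4] at this <;> omega
        exact le_trans (Finset.card_le_card hsub)
          ((Finset.card_insert_le _ _).trans (by simp))
      · refine le_trans (Finset.card_le_one.mpr ?_) (by omega)
        intro i hi j hj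
        have h1 := hval i hi
        have h2 := hval j hj
        have hiv : i.val = a.val := by
          by_cases hl2 : i.val < 2
          · simp [hl2] at h1; omega
          · by_cases hl4 : i.val < 4 <;> simp [hl2, hl4] at h1 <;> omega
        have hjv : j.val = a.val := by
          by_cases hl2 : j.val < 2
          · simp [hl2] at h2; omega
          · by_cases hl4 : j.val < 4 <;> simp [hl2, hl4] at h2 <;> omega
        exact Fin.ext (hiv.trans hjv.symm)
  -- μ's fiber over symbol 0 has size 3
  have hμfib : (Finset.univ.filter fun i : Fin m => μ i = ⟨0, h0q⟩).card = 3 := by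
    have hfe : (Finset.univ.filter fun i : Fin m => μ i = ⟨0, h0q⟩)
        = {⟨0, h0m⟩, ⟨1, h1m⟩, ⟨2, h2m⟩} := by
      ext i
      simp only [Finset.mem_filter, Finset.mem_univ, true_and, Fin.ext_iff, Fin.val_mk,
        Finset.mem_insert, Finset.mem_singleton, hμval i]
      by_cases h3 : i.val < 3 <;> simp [h3] <;> omega
    rw [hfe]
    rw [Finset.card_insert_of_notMem (by simp [Fin.ext_iff]),
      Finset.card_insert_of_notMem (by simp [Fin.ext_iff]), Finset.card_singleton]
  -- numCount differ at 3
  have hnum3ν : numCount ν 3 = 0 := by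
    unfold numCount
    rw [Finset.card_eq_zero, Finset.filter_eq_empty_iff]
    intro a _
    have := hνfib a
    omega
  have hnum3μ : 0 < numCount μ 3 := by
    unfold numCount
    refine Finset.card_pos.mpr ⟨⟨0, h0q⟩, ?_⟩
    simp only [Finset.mem_filter, Finset.mem_univ, true_and]
    exact hμfib
  refine ⟨distμ, distν, ?_, ?_⟩
  · intro h
    have := congrFun h 3
    omega
  · intro h σ heq
    have hmem : ∀ j : Fin m, j.val < 3 → σ j ∈ (Finset.univ.filter
        fun i : Fin m => ν i = h ⟨0, h0q⟩) := by
      intro j hj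
      simp only [Finset.mem_filter, Finset.mem_univ, true_and]
      rw [← heq]
      simp only
      rw [← Equiv.Perm.mul_apply, inv_mul_cancel, Equiv.Perm.one_apply, hμ0 j hj]
    have hsub : ({σ ⟨0, h0m⟩, σ ⟨1, h1m⟩, σ ⟨2, h2m⟩} : Finset (Fin m)) ⊆
        (Finset.univ.filter fun i : Fin m => ν i = h ⟨0, h0q⟩) := by
      intro i hi
      simp only [Finset.mem_insert, Finset.mem_singleton] at hi
      rcases hi with rfl | rfl | rfl
      · exact hmem _ (show (0:ℕ) < 3 by omega)
      · exact hmem _ (show (1:ℕ) < 3 by omega)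
      · exact hmem _ (show (2:ℕ) < 3 by omega)
    have hcard3 : ({σ ⟨0, h0m⟩, σ ⟨1, h1m⟩, σ ⟨2, h2m⟩} : Finset (Fin m)).card = 3 := by
      rw [Finset.card_insert_of_notMem, Finset.card_insert_of_notMem, Finset.card_singleton]
      · simp only [Finset.mem_singleton]
        exact fun hc => (by simp [Fin.ext_iff] : (⟨1,h1m⟩ : Fin m) ≠ ⟨2,h2m⟩) (σ.injective hc)
      · simp only [Finset.mem_insert, Finset.mem_singleton]
        push_neg
        exact ⟨fun hc => (by simp [Fin.ext_iff] : (⟨0,h0m⟩ : Fin m) ≠ ⟨1,h1m⟩) (σ.injective hc),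
          fun hc => (by simp [Fin.ext_iff] : (⟨0,h0m⟩ : Fin m) ≠ ⟨2,h2m⟩) (σ.injective hc)⟩
    have hle := Finset.card_le_card hsub
    rw [hcard3] at hle
    have := hνfib (h ⟨0, h0q⟩)
    omega
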